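/- Let m ∈ M_ℝ. Then m ∈ A_h if and only if m ∈ Δ_h and for every i = 1, …, r there exists n ∈ S_i with h(n) + ⟨m, n⟩ = 0. In other words, the union of those exposed faces G of Δ_h with N_i(G) ≠ ∅ for all i coincides with the set { m ∈ Δ_h : ∀ i, ∃ n ∈ S_i, h(n) + ⟨m, n⟩ = 0 }. -/
import Mathlib


open scoped RealInnerProductSpace

/-- pointwise description of the tropical sphere of Haase–Zharkov:
`m ∈ A_h` iff `m ∈ Δ_h` and for each `i` there is `n ∈ S_i` with
`h(n) + ⟪m, n⟫ = 0`. -/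
theorem stmt_7 (D r : ℕ) (h : EuclideanSpace ℝ (Fin D) → ℝ)
    (Δ : Set (EuclideanSpace ℝ (Fin D)))
    (hΔ : Δ = {m | ∀ n, ⟪m, n⟫ ≥ -h n})
    (hne : Δ.Nonempty) (hcpt : IsCompact Δ)
    (S : Fin r → Finset (EuclideanSpace ℝ (Fin D)))
    (hS : ∀ i, (0 : EuclideanSpace ℝ (Fin D)) ∉ S i)
    (A : Set (EuclideanSpace ℝ (Fin D)))
    (hA : A = ⋃₀ {G | IsExposed ℝ Δ G ∧
      ∀ i, ∃ n ∈ S i, ∀ m ∈ G, h n + ⟪m, n⟫ = 0}) :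
    ∀ m, m ∈ A ↔ m ∈ Δ ∧ ∀ i, ∃ n ∈ S i, h n + ⟪m, n⟫ = 0 := by
  intro m
  subst hA
  constructor
  · rintro ⟨G, ⟨hGexp, hGprop⟩, hmG⟩
    have hmΔ := hGexp.subset hmG
    exact ⟨hmΔ, fun i => (hGprop i).imp fun n hn => ⟨hn.1, hn.2 m hmG⟩⟩
  · rintro ⟨hmΔ, hw⟩
    choose w hwS hw0 using hw
    set nn : EuclideanSpace ℝ (Fin D) := ∑ i, w i with hnn
    set l : EuclideanSpace ℝ (Fin D) →L[ℝ] ℝ := innerSL ℝ (-nn) with hl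
    have hlval : ∀ y, l y = -∑ i, ⟪y, w i⟫ := by
      intro y
      simp only [hl, innerSL_apply_apply, hnn, inner_neg_left, sum_inner]
      congr 1
      exact Finset.sum_congr rfl fun i _ => real_inner_comm _ _
    have hle : ∀ y ∈ Δ, l y ≤ ∑ i, h (w i) := by
      intro y hy
      rw [hlval]
      have : -∑ i : Fin r, ⟪y, w i⟫ = ∑ i : Fin r, -⟪y, w i⟫ := by
        rw [Finset.sum_neg_distrib]
      rw [this]
      apply Finset.sum_le_sum
      intro i _
      have : ⟪y, w i⟫ ≥ -h (w i) := by rw [hΔ] at hy; exact hy (w i)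
      linarith
    have hlm : l m = ∑ i, h (w i) := by
      rw [hlval]
      have : ∀ i : Fin r, ⟪m, w i⟫ = -h (w i) := fun i => by
        have := hw0 i; linarith
      simp only [this, Finset.sum_neg_distrib, neg_neg]
    set G : Set (EuclideanSpace ℝ (Fin D)) := {x ∈ Δ | ∀ y ∈ Δ, l y ≤ l x}
      with hG
    refine ⟨G, ⟨fun _ => ⟨l, rfl⟩, fun i => ⟨w i, hwS i, fun x hx => ?_⟩⟩,
      hmΔ, fun y hy => hlm ▸ hle y hy⟩
    obtain ⟨hxΔ, hxmax⟩ := hx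
    have hlx : l x = ∑ i, h (w i) :=
      le_antisymm (hle x hxΔ) (hlm ▸ hxmax m hmΔ)
    have hsum : ∑ j : Fin r, (h (w j) + ⟪x, w j⟫) = 0 := by
      rw [Finset.sum_add_distrib]
      have := hlval x
      rw [hlx] at this
      linarith
    have hnonneg : ∀ j ∈ Finset.univ, (0:ℝ) ≤ h (w j) + ⟪x, w j⟫ := by
      intro j _
      have : ⟪x, w j⟫ ≥ -h (w j) := by rw [hΔ] at hxΔ; exact hxΔ (w j)
      linarith
    have := (Finset.sum_eq_zero_iff_of_nonneg hnonneg).mp hsum i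
      (Finset.mem_univ i)
    linarith [this]
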